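/- Let ρ₁, ρ₂ be density matrices on ℂⁿ, ψ a unit vector in ℂⁿ, and let S be the cyclic shift operator on (ℂⁿ)^{⊗3} defined by S(v₁ ⊗ v₂ ⊗ v₃) = v₃ ⊗ v₁ ⊗ v₂. Then (1/2)·tr[S·(ρ₁ ⊗ ρ₂ ⊗ |ψ⟩⟨ψ|) + (ρ₁ ⊗ ρ₂ ⊗ |ψ⟩⟨ψ|)·S*] = Re tr[S·(ρ₁ ⊗ ρ₂ ⊗ |ψ⟩⟨ψ|)] = (1/2)⟨ψ, {ρ₁,ρ₂}ψ⟩. -/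
import Mathlib

open Matrix Kronecker ComplexOrder

/-- The pure state (rank-one orthogonal projection) `|ψ⟩⟨ψ|` associated with a vector
`ψ : Fin n → ℂ`; its `(i, j)` entry is `ψ i * conj (ψ j)`. -/
noncomputable def pureState {n : ℕ} (ψ : Fin n → ℂ) : Matrix (Fin n) (Fin n) ℂ :=
  vecMulVec ψ (star ψ)

lemma interference_trace_SM {n : ℕ} (ρ₁ ρ₂ : Matrix (Fin n) (Fin n) ℂ)
    (ψ : Fin n → ℂ)
    (S : Matrix ((Fin n × Fin n) × Fin n) ((Fin n × Fin n) × Fin n) ℂ)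
    (hS : ∀ p q, S p q = if q = ((p.1.2, p.2), p.1.1) then 1 else 0) :
    (S * (ρ₁ ⊗ₖ ρ₂ ⊗ₖ pureState ψ)).trace = star ψ ⬝ᵥ (ρ₂ * ρ₁) *ᵥ ψ := by
  simp only [Matrix.trace, Matrix.diag, Matrix.mul_apply, hS, ite_mul, one_mul, zero_mul,
    Finset.sum_ite_eq, Finset.sum_ite_eq', Finset.mem_univ, if_true, pureState,
    kroneckerMap_apply, vecMulVec_apply, Pi.star_apply, dotProduct, mulVec]
  rw [Fintype.sum_prod_type]
  rw [Finset.sum_comm]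
  simp only [Finset.mul_sum, Finset.sum_mul]
  refine Finset.sum_congr rfl fun x _ => ?_
  rw [Fintype.sum_prod_type]
  refine Finset.sum_congr rfl fun a _ => Finset.sum_congr rfl fun b _ => ?_
  ring

lemma interference_trace_MS {n : ℕ} (ρ₁ ρ₂ : Matrix (Fin n) (Fin n) ℂ)
    (ψ : Fin n → ℂ)
    (S : Matrix ((Fin n × Fin n) × Fin n) ((Fin n × Fin n) × Fin n) ℂ)
    (hS : ∀ p q, S p q = if q = ((p.1.2, p.2), p.1.1) then 1 else 0) :
    ((ρ₁ ⊗ₖ ρ₂ ⊗ₖ pureState ψ) * Sᴴ).trace = star ψ ⬝ᵥ (ρ₁ * ρ₂) *ᵥ ψ := by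
  simp only [Matrix.trace, Matrix.diag, Matrix.mul_apply, conjTranspose_apply, hS,
    apply_ite (star : ℂ → ℂ), star_one, star_zero, mul_ite, mul_one, mul_zero,
    Finset.sum_ite_eq, Finset.sum_ite_eq', Finset.mem_univ, if_true, pureState,
    kroneckerMap_apply, vecMulVec_apply, Pi.star_apply, dotProduct, mulVec]
  rw [Fintype.sum_prod_type]
  simp only [Finset.mul_sum, Finset.sum_mul]
  rw [Fintype.sum_prod_type]
  refine Finset.sum_congr rfl fun a _ => ?_
  rw [Finset.sum_comm]
  refine Finset.sum_congr rfl fun b _ => Finset.sum_congr rfl fun c _ => ?_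
  ring

/-- Let `ρ₁, ρ₂` be density matrices on `ℂⁿ`, `ψ` a unit vector, and `S`
the cyclic shift on `(ℂⁿ)^{⊗3}` with `S (v₁ ⊗ v₂ ⊗ v₃) = v₃ ⊗ v₁ ⊗ v₂` (as a
permutation matrix on `(Fin n × Fin n) × Fin n`, `S p q = 1` iff
`q = ((p.1.2, p.2), p.1.1)`).  Then with `M = ρ₁ ⊗ ρ₂ ⊗ |ψ⟩⟨ψ|`:
`(1/2)(tr[S·M] + tr[M·S*]) = Re tr[S·M] = (1/2)⟨ψ, {ρ₁,ρ₂} ψ⟩`. -/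
theorem interference_visibility {n : ℕ} (ρ₁ ρ₂ : Matrix (Fin n) (Fin n) ℂ)
    (hρ₁ : ρ₁.PosSemidef) (hρ₁tr : ρ₁.trace = 1)
    (hρ₂ : ρ₂.PosSemidef) (hρ₂tr : ρ₂.trace = 1)
    (ψ : Fin n → ℂ) (hψ : star ψ ⬝ᵥ ψ = 1)
    (S : Matrix ((Fin n × Fin n) × Fin n) ((Fin n × Fin n) × Fin n) ℂ)
    (hS : ∀ p q, S p q = if q = ((p.1.2, p.2), p.1.1) then 1 else 0) :
    (1 / 2 : ℂ) * ((S * (ρ₁ ⊗ₖ ρ₂ ⊗ₖ pureState ψ)).trace +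
          ((ρ₁ ⊗ₖ ρ₂ ⊗ₖ pureState ψ) * Sᴴ).trace)
        = (((S * (ρ₁ ⊗ₖ ρ₂ ⊗ₖ pureState ψ)).trace.re : ℝ) : ℂ) ∧
    (((S * (ρ₁ ⊗ₖ ρ₂ ⊗ₖ pureState ψ)).trace.re : ℝ) : ℂ)
        = (1 / 2 : ℂ) * (star ψ ⬝ᵥ (ρ₁ * ρ₂ + ρ₂ * ρ₁) *ᵥ ψ) := by
  have h1 := interference_trace_SM ρ₁ ρ₂ ψ S hS
  have h2 := interference_trace_MS ρ₁ ρ₂ ψ S hS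
  have hc : star ((S * (ρ₁ ⊗ₖ ρ₂ ⊗ₖ pureState ψ)).trace)
      = ((ρ₁ ⊗ₖ ρ₂ ⊗ₖ pureState ψ) * Sᴴ).trace := by
    rw [h1, h2]
    have : star (star ψ ⬝ᵥ (ρ₂ * ρ₁) *ᵥ ψ) = star ((ρ₂ * ρ₁) *ᵥ ψ) ⬝ᵥ ψ := by
      rw [← star_dotProduct_star, star_star]
    rw [this, star_mulVec, conjTranspose_mul, hρ₁.1, hρ₂.1, ← dotProduct_mulVec]
  set z := (S * (ρ₁ ⊗ₖ ρ₂ ⊗ₖ pureState ψ)).trace with hz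
  have key : ((z.re : ℝ) : ℂ) = (1 / 2 : ℂ) * (z + star z) := by
    rw [show (star z) = (starRingEnd ℂ) z from rfl, Complex.add_conj]
    push_cast
    ring
  constructor
  · rw [← hc]
    exact key.symm
  · rw [add_mulVec, dotProduct_add, ← h1, ← h2, ← hc, key]
    ring
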